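/- Let L be a finite lattice and let r be an admissible relation on pairs (F,G) of nonempty subsets of L, i.e. r satisfies: (1) r(F,G) holds whenever G ⊆ F; (2) if r(F,G) holds and C ∉ F then r(F, G∖{C}) holds; (3) if r(F,G) holds then r(F∪{C}, G∪{C}) holds for every C ∈ L. Then the set of matching value terms R = { mvt(F,G) : r(F,G) } is upward closed in the dominance order: if r(F₁,G₁) holds with F₁ ⊆ G₁, F₁ nonempty, and F₂ ⊆ G₂ are nonempty subsets with either F₂ = G₂, or F₁ ⊆ F₂ and G₂∖F₂ ⊆ G₁ (the condition characterizing mvt(F₁,G₁) ≼ mvt(F₂,G₂)), then r(F₂,G₂) holds. Hence R is a filter in the lattice of matching value terms. -/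

import Mathlib

open Finset

theorem stmt11_aux_insert {L : Type*} [DecidableEq L]
    (r : Finset L → Finset L → Prop)
    (hadm3 : ∀ (F G : Finset L) (C : L), r F G → r (insert C F) (insert C G))
    (S : Finset L) : ∀ F G : Finset L, r F G → r (S ∪ F) (S ∪ G) := by
  induction S using Finset.induction_on with
  | empty => simpa using fun F G h => h
  | insert _ _ hx ih =>
    intro F G h
    rw [insert_union, insert_union]
    exact hadm3 _ _ _ (ih F G h)

theorem stmt11_aux_erase {L : Type*} [DecidableEq L]
    (r : Finset L → Finset L → Prop)
    (hadm2 : ∀ (F G : Finset L) (C : L), r F G → C ∉ F → r F (G.erase C))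
    (T : Finset L) : ∀ F G : Finset L, Disjoint T F → r F G → r F (G \ T) := by
  induction T using Finset.induction_on with
  | empty => simpa using fun F G h => h
  | @insert a T ha ih =>
    intro F G hd h
    have hd' : Disjoint T F := (Finset.disjoint_insert_left.mp hd).2
    have haF : a ∉ F := (Finset.disjoint_insert_left.mp hd).1
    have := hadm2 F (G \ T) a (ih F G hd' h) haF
    have heq : (G \ T).erase a = G \ insert a T := by
      ext x
      simp only [Finset.mem_erase, Finset.mem_sdiff, Finset.mem_insert]
      tauto
    rwa [heq] at this

/-- if r is an admissible relation on pairs of nonempty subsets of a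
finite lattice L, then the set of matching value terms { mvt(F,G) : r(F,G) } is
upward closed in the dominance order: if r(F₁,G₁) holds with F₁ ⊆ G₁, F₁ nonempty,
and F₂ ⊆ G₂ are nonempty with either F₂ = G₂ or (F₁ ⊆ F₂ and G₂∖F₂ ⊆ G₁)
(the condition characterizing mvt(F₁,G₁) ≼ mvt(F₂,G₂)), then r(F₂,G₂) holds. -/
theorem stmt11 {L : Type*} [Lattice L] [Fintype L] [DecidableEq L]
    (r : Finset L → Finset L → Prop)
    (hadm1 : ∀ F G : Finset L, G ⊆ F → r F G)
    (hadm2 : ∀ (F G : Finset L) (C : L), r F G → C ∉ F → r F (G.erase C))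
    (hadm3 : ∀ (F G : Finset L) (C : L), r F G → r (insert C F) (insert C G))
    (F₁ G₁ F₂ G₂ : Finset L)
    (hne₁ : F₁.Nonempty) (hne₂ : F₂.Nonempty)
    (h₁ : F₁ ⊆ G₁) (h₂ : F₂ ⊆ G₂)
    (hr : r F₁ G₁)
    (hdom : F₂ = G₂ ∨ (F₁ ⊆ F₂ ∧ G₂ \ F₂ ⊆ G₁)) :
    r F₂ G₂ := by
  rcases hdom with h | ⟨hF, hG⟩
  · exact hadm1 F₂ G₂ (h ▸ Finset.Subset.refl _)
  · have step1 : r (F₂ ∪ F₁) (F₂ ∪ G₁) :=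
      stmt11_aux_insert r hadm3 F₂ F₁ G₁ hr
    rw [Finset.union_eq_left.mpr hF] at step1
    have hG₂sub : G₂ ⊆ F₂ ∪ G₁ := by
      intro x hx
      by_cases hxF : x ∈ F₂
      · exact Finset.mem_union_left _ hxF
      · exact Finset.mem_union_right _ (hG (Finset.mem_sdiff.mpr ⟨hx, hxF⟩))
    have hdisj : Disjoint ((F₂ ∪ G₁) \ G₂) F₂ := by
      rw [Finset.disjoint_left]
      intro x hx hxF
      exact (Finset.mem_sdiff.mp hx).2 (h₂ hxF)
    have step2 := stmt11_aux_erase r hadm2 ((F₂ ∪ G₁) \ G₂) F₂ (F₂ ∪ G₁) hdisj step1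
    rwa [Finset.sdiff_sdiff_self_left, Finset.inter_eq_right.mpr hG₂sub] at step2
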